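/- Let H be a Hilbert space, A : H → H a bounded injective operator with cyclic vector g ∈ ran A, let f solve Af = g, and fix φ₀ ∈ H \ {0}. Define à = A ⊕ |φ₀⟩⟨φ₀| on H ⊕ H and g̃ = g ⊕ 0. Then f̃ = f ⊕ 0 is a solution to Ãf̃ = g̃ lying in the closure of K(Ã, g̃) = H ⊕ {0}, while for any nonzero ξ ⊥ φ₀ the vector f̃_ξ = f ⊕ ξ is also a solution but does not lie in the closure of K(Ã, g̃). -/

import Mathlib

/-- For a bounded injective `A` with cyclic vector `g ∈ ran A`, solution `f` of `Af = g`,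
and `φ₀ ≠ 0`, the operator `Ã = A ⊕ |φ₀⟩⟨φ₀|` on `H ⊕ H` with datum `g̃ = g ⊕ 0` has
closure of `K(Ã, g̃)` equal to `H ⊕ {0}`; `f̃ = f ⊕ 0` is a Krylov solution, while for
any nonzero `ξ ⊥ φ₀` the solution `f̃_ξ = f ⊕ ξ` is not a Krylov solution. -/
theorem stmt4 {H : Type*} [NormedAddCommGroup H] [InnerProductSpace ℂ H] [CompleteSpace H]
    (A : H →L[ℂ] H) (hinj : Function.Injective A)
    (g f φ₀ : H) (hφ₀ : φ₀ ≠ 0)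
    (hg : g ∈ Set.range A)
    (hcyc : Dense ((Submodule.span ℂ (Set.range fun k : ℕ => (A ^ k) g)) : Set H))
    (hf : A f = g)
    (Atil : WithLp 2 (H × H) →L[ℂ] WithLp 2 (H × H))
    (hAtil : ∀ x y : H, Atil ((WithLp.equiv 2 (H × H)).symm (x, y))
        = (WithLp.equiv 2 (H × H)).symm (A x, (inner ℂ φ₀ y : ℂ) • φ₀)) :
    closure ((Submodule.span ℂ (Set.range fun k : ℕ =>
          (Atil ^ k) ((WithLp.equiv 2 (H × H)).symm (g, 0)))) : Set (WithLp 2 (H × H)))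
        = {p : WithLp 2 (H × H) | (WithLp.equiv 2 (H × H) p).2 = 0}
    ∧ Atil ((WithLp.equiv 2 (H × H)).symm (f, 0)) = (WithLp.equiv 2 (H × H)).symm (g, 0)
    ∧ (WithLp.equiv 2 (H × H)).symm (f, 0) ∈ closure ((Submodule.span ℂ (Set.range fun k : ℕ =>
          (Atil ^ k) ((WithLp.equiv 2 (H × H)).symm (g, 0)))) : Set (WithLp 2 (H × H)))
    ∧ ∀ ξ : H, ξ ≠ 0 → (inner ℂ φ₀ ξ : ℂ) = 0 →
        Atil ((WithLp.equiv 2 (H × H)).symm (f, ξ)) = (WithLp.equiv 2 (H × H)).symm (g, 0)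
        ∧ (WithLp.equiv 2 (H × H)).symm (f, ξ) ∉ closure ((Submodule.span ℂ (Set.range fun k : ℕ =>
            (Atil ^ k) ((WithLp.equiv 2 (H × H)).symm (g, 0)))) : Set (WithLp 2 (H × H))) := by
  set E := WithLp 2 (H × H)
  let e : E ≃L[ℂ] H × H := WithLp.prodContinuousLinearEquiv 2 ℂ H H
  -- generators
  have hpow : ∀ k : ℕ, (Atil ^ k) ((WithLp.equiv 2 (H × H)).symm (g, 0))
      = (WithLp.equiv 2 (H × H)).symm ((A ^ k) g, 0) := by
    intro k
    induction k with
    | zero => simp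
    | succ n ih =>
        rw [pow_succ', ContinuousLinearMap.mul_apply, ih, hAtil, pow_succ',
          ContinuousLinearMap.mul_apply]
        simp
  set K : Set E := (Submodule.span ℂ (Set.range fun k : ℕ =>
      (Atil ^ k) ((WithLp.equiv 2 (H × H)).symm (g, 0))) : Set E) with hK
  -- L : second component as CLM
  let L : E →L[ℂ] H := (ContinuousLinearMap.snd ℂ H H).comp (e : E →L[ℂ] H × H)
  have hLapp : ∀ p : E, L p = (WithLp.equiv 2 (H × H) p).2 := fun p => rfl
  have hclosed : IsClosed {p : E | (WithLp.equiv 2 (H × H) p).2 = 0} := by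
    have : {p : E | (WithLp.equiv 2 (H × H) p).2 = 0} = L ⁻¹' {0} := rfl
    rw [this]
    exact isClosed_singleton.preimage L.continuous
  have hsub : closure K ⊆ {p : E | (WithLp.equiv 2 (H × H) p).2 = 0} := by
    apply closure_minimal _ hclosed
    rw [hK]
    rw [show {p : E | (WithLp.equiv 2 (H × H) p).2 = 0} = (LinearMap.ker (L : E →ₗ[ℂ] H) : Set E) from rfl]
    norm_cast
    rw [Submodule.span_le]
    rintro _ ⟨k, rfl⟩
    simp only [SetLike.mem_coe, LinearMap.mem_ker, ContinuousLinearMap.coe_coe]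
    rw [hpow k, hLapp]
    simp
  -- the embedding
  let ι : H →L[ℂ] E := (e.symm : H × H →L[ℂ] E).comp (ContinuousLinearMap.inl ℂ H H)
  have hιapp : ∀ x : H, ι x = (WithLp.equiv 2 (H × H)).symm (x, 0) := fun x => rfl
  have hmap : ∀ x : H, x ∈ (Submodule.span ℂ (Set.range fun k : ℕ => (A ^ k) g) : Set H)
      → ι x ∈ K := by
    intro x hx
    have := Submodule.apply_mem_span_image_of_mem_span (ι : H →ₗ[ℂ] E) hx
    rw [hK]
    refine Submodule.span_mono ?_ this
    rintro _ ⟨_, ⟨k, rfl⟩, rfl⟩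
    exact ⟨k, by simpa using (hpow k).trans (hιapp _).symm⟩
  have hsup : ∀ x : H, ι x ∈ closure K := by
    intro x
    have hx : x ∈ closure ((Submodule.span ℂ (Set.range fun k : ℕ => (A ^ k) g) : Set H)) := by
      rw [hcyc.closure_eq]; trivial
    have := (ι.continuous.continuousAt (x := x)).tendsto
    have himg : ι x ∈ closure (ι '' ((Submodule.span ℂ (Set.range fun k : ℕ => (A ^ k) g) : Set H))) :=
      image_closure_subset_closure_image ι.continuous ⟨x, hx, rfl⟩
    exact closure_mono (by rintro _ ⟨y, hy, rfl⟩; exact hmap y hy) himg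
  have hmain : closure K = {p : E | (WithLp.equiv 2 (H × H) p).2 = 0} := by
    apply subset_antisymm hsub
    intro p hp
    have hp2 : (WithLp.equiv 2 (H × H) p).2 = 0 := hp
    have : p = ι (WithLp.equiv 2 (H × H) p).1 := by
      rw [hιapp, ← hp2, Prod.mk.eta, Equiv.symm_apply_apply]
    rw [this]
    exact hsup _
  refine ⟨hmain, ?_, ?_, ?_⟩
  · rw [hAtil, hf]; simp
  · rw [hmain]; exact rfl
  · intro ξ hξ hperp
    constructor
    · rw [hAtil, hf, hperp]; simp
    · rw [hmain]
      exact hξ
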